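/- For every m ∈ {0} ∪ ℕ, the set of all two-colored partitions p such that for every block B of p and any two legs α, β ∈ B the color distance δ_p(α,β) is a multiple of m, is a category of two-colored partitions. -/

import Mathlib

noncomputable section
attribute [local instance] Classical.propDecidable

/-- A two-colored partition: two rows of points colored white (`true`) or black (`false`),
together with a set partition (setoid) of all points into blocks. -/
structure TCP where
  upper : ℕ
  lower : ℕ
  upColor : Fin upper → Bool
  loColor : Fin lower → Bool
  rel : Setoid (Fin upper ⊕ Fin lower)

namespace TCP

/-- The points of a partition. -/
abbrev Point (p : TCP) := Fin p.upper ⊕ Fin p.lower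

/-- Native color of a point. -/
def color (p : TCP) : p.Point → Bool
  | .inl j => p.upColor j
  | .inr i => p.loColor i

/-- Normalized color: inverted on the upper row. -/
def ncolor (p : TCP) : p.Point → Bool
  | .inl j => !(p.upColor j)
  | .inr i => p.loColor i

/-- Sign of a point: `+1` for normalized white, `-1` for normalized black. -/
def sgn (p : TCP) (x : p.Point) : ℤ := if p.ncolor x then 1 else -1

/-- Color sum of a finite set of points. -/
def csum (p : TCP) (S : Finset p.Point) : ℤ := ∑ x ∈ S, p.sgn x

/-- Total color sum Σ(p). -/
def tsum (p : TCP) : ℤ := p.csum Finset.univ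

/-- Total number of points. -/
def size (p : TCP) : ℕ := p.upper + p.lower

/-- Position in the counter-clockwise cyclic order: lower points left to right,
then upper points right to left. -/
def pos (p : TCP) : p.Point → ℕ
  | .inr i => i
  | .inl j => p.lower + (p.upper - 1 - j)

/-- Cyclic position of `y` relative to `x`. -/
def relpos (p : TCP) (x y : p.Point) : ℕ := (p.size + p.pos y - p.pos x) % p.size

/-- Half-open cyclic interval `]x,y]`. -/
def Ioc (p : TCP) (x y : p.Point) : Finset p.Point :=
  Finset.univ.filter (fun z => 0 < p.relpos x z ∧ p.relpos x z ≤ p.relpos x y)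

/-- Open cyclic interval `]x,y[`. -/
def Ioo (p : TCP) (x y : p.Point) : Finset p.Point :=
  Finset.univ.filter (fun z => 0 < p.relpos x z ∧ p.relpos x z < p.relpos x y)

/-- The color distance between two points. -/
def cdist (p : TCP) (x y : p.Point) : ℤ :=
  if x = y then p.tsum
  else if p.ncolor x = p.ncolor y then p.csum (p.Ioc x y)
  else p.csum (p.Ioo x y)

/-- The block of a point. -/
def blockOf (p : TCP) (x : p.Point) : Finset p.Point :=
  Finset.univ.filter (fun y => p.rel.r x y)

/-- A finite set of points is a block of `p`. -/
def IsBlock (p : TCP) (B : Finset p.Point) : Prop := ∃ x, B = p.blockOf x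

/-- `(a,b,c,d)` is ordered in the cyclic order of `p`. -/
def Ordered4 (p : TCP) (a b c d : p.Point) : Prop :=
  0 < p.relpos a b ∧ p.relpos a b < p.relpos a c ∧ p.relpos a c < p.relpos a d

/-- Two sets of points cross each other. -/
def Cross (p : TCP) (B₁ B₂ : Finset p.Point) : Prop :=
  ∃ a ∈ B₁, ∃ b ∈ B₁, ∃ a' ∈ B₂, ∃ b' ∈ B₂, p.Ordered4 a a' b b'

/-! ### The analyzer -/

/-- Set of block sizes. -/
def Fset (S : Set TCP) : Set ℕ :=
  {n | ∃ p ∈ S, ∃ B : Finset p.Point, p.IsBlock B ∧ B.card = n}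

/-- Set of block color sums. -/
def Vset (S : Set TCP) : Set ℤ :=
  {v | ∃ p ∈ S, ∃ B : Finset p.Point, p.IsBlock B ∧ p.csum B = v}

/-- Set of total color sums. -/
def Sset (S : Set TCP) : Set ℤ := {s | ∃ p ∈ S, p.tsum = s}

/-- Set of color distances between cyclically subsequent legs of the same block
having the same normalized color. -/
def Lset (S : Set TCP) : Set ℤ :=
  {d | ∃ p ∈ S, ∃ B : Finset p.Point, p.IsBlock B ∧ ∃ a ∈ B, ∃ b ∈ B, a ≠ b ∧
        p.Ioo a b ∩ B = ∅ ∧ p.ncolor a = p.ncolor b ∧ p.cdist a b = d}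

/-- Set of color distances between cyclically subsequent legs of the same block
having different normalized colors. -/
def Kset (S : Set TCP) : Set ℤ :=
  {d | ∃ p ∈ S, ∃ B : Finset p.Point, p.IsBlock B ∧ ∃ a ∈ B, ∃ b ∈ B, a ≠ b ∧
        p.Ioo a b ∩ B = ∅ ∧ p.ncolor a ≠ p.ncolor b ∧ p.cdist a b = d}

/-- Set of color distances between legs of two crossing blocks. -/
def Xset (S : Set TCP) : Set ℤ :=
  {d | ∃ p ∈ S, ∃ B₁ B₂ : Finset p.Point, p.IsBlock B₁ ∧ p.IsBlock B₂ ∧ B₁ ≠ B₂ ∧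
        p.Cross B₁ B₂ ∧ ∃ a ∈ B₁, ∃ b ∈ B₂, p.cdist a b = d}

/-- The parameter domain. -/
abbrev Param := Set ℕ × Set ℤ × Set ℤ × Set ℤ × Set ℤ × Set ℤ

/-- The analyzer `Z = (F, V, Σ, L, K, X)`. -/
def Z (S : Set TCP) : Param := (Fset S, Vset S, Sset S, Lset S, Kset S, Xset S)

/-! ### Operations on partitions -/

/-- Componentwise relation on a sum type. -/
def sumRel {α β : Type*} (s : α → α → Prop) (t : β → β → Prop) : α ⊕ β → α ⊕ β → Prop
  | .inl a, .inl b => s a b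
  | .inr a, .inr b => t a b
  | _, _ => False

/-- Componentwise setoid on a sum type. -/
def sumSetoid {α β : Type*} (s : Setoid α) (t : Setoid β) : Setoid (α ⊕ β) where
  r := sumRel s.r t.r
  iseqv := by
    refine ⟨?_, ?_, ?_⟩
    · rintro (a | a) <;> exact Setoid.refl _
    · rintro (a | a) (b | b) h <;> first | exact Setoid.symm h | exact h.elim
    · rintro (a | a) (b | b) (c | c) h₁ h₂ <;>
        first | exact Setoid.trans h₁ h₂ | exact h₁.elim | exact h₂.elim

/-- Identification of the points of a tensor product with a sum of points. -/
def ptmap (p q : TCP) :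
    (Fin (p.upper + q.upper) ⊕ Fin (p.lower + q.lower)) → (p.Point ⊕ q.Point)
  | .inl j => (finSumFinEquiv.symm j).elim (fun a => .inl (.inl a)) (fun a => .inr (.inl a))
  | .inr i => (finSumFinEquiv.symm i).elim (fun a => .inl (.inr a)) (fun a => .inr (.inr a))

/-- Tensor product: horizontal concatenation. -/
def tensor (p q : TCP) : TCP where
  upper := p.upper + q.upper
  lower := p.lower + q.lower
  upColor := fun j => (finSumFinEquiv.symm j).elim p.upColor q.upColor
  loColor := fun i => (finSumFinEquiv.symm i).elim p.loColor q.loColor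
  rel := Setoid.comap (ptmap p q) (sumSetoid p.rel q.rel)

/-- Embedding of the points of `p` into the points of `p.tensor q`. -/
def tinl (p q : TCP) : p.Point → (p.tensor q).Point
  | .inl j => Sum.inl (Fin.castAdd q.upper j)
  | .inr i => Sum.inr (Fin.castAdd q.lower i)

/-- Embedding of the points of `q` into the points of `p.tensor q`. -/
def tinr (p q : TCP) : q.Point → (p.tensor q).Point
  | .inl j => Sum.inl (Fin.natAdd p.upper j)
  | .inr i => Sum.inr (Fin.natAdd p.lower i)

/-- Involution: swapping the rows. -/
def invol (p : TCP) : TCP where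
  upper := p.lower
  lower := p.upper
  upColor := p.loColor
  loColor := p.upColor
  rel := Setoid.comap Sum.swap p.rel

/-- `(p, q)` is composable: the upper row of `p` matches the lower row of `q`. -/
structure Composable (p q : TCP) : Prop where
  len : p.upper = q.lower
  col : ∀ j : Fin p.upper, p.upColor j = q.loColor (Fin.cast len j)

/-- Generating relation for the composition of `p` and `q`. -/
def compRel (p q : TCP) (h : p.upper = q.lower) :
    (q.Point ⊕ p.Point) → (q.Point ⊕ p.Point) → Prop := fun x y =>
  (∃ a b, x = .inl a ∧ y = .inl b ∧ q.rel.r a b) ∨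
  (∃ a b, x = .inr a ∧ y = .inr b ∧ p.rel.r a b) ∨
  (∃ j : Fin p.upper, x = .inl (.inr (Fin.cast h j)) ∧ y = .inr (.inl j)) ∨
  (∃ j : Fin p.upper, y = .inl (.inr (Fin.cast h j)) ∧ x = .inr (.inl j))

/-- Composition: vertical concatenation, with blocks joined along the middle row. -/
def comp (p q : TCP) (h : Composable p q) : TCP where
  upper := q.upper
  lower := p.lower
  upColor := q.upColor
  loColor := p.loColor
  rel := Setoid.comap
    (fun x : Fin q.upper ⊕ Fin p.lower => match x with
      | .inl j => Sum.inl (Sum.inl j : q.Point)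
      | .inr i => Sum.inr (Sum.inr i : p.Point))
    (Relation.EqvGen.setoid (compRel p q h.len))

/-- The empty partition. -/
def emptyP : TCP := ⟨0, 0, Fin.elim0, Fin.elim0, ⊤⟩

/-- The identity partition of color `c`: one upper and one lower point of color `c`
joined in one block. -/
def idPart (c : Bool) : TCP := ⟨1, 1, fun _ => c, fun _ => c, ⊤⟩

/-- The one-row pair partition with two lower points of colors `c₁`, `c₂` in one block. -/
def lpair (c₁ c₂ : Bool) : TCP := ⟨0, 2, Fin.elim0, fun i => if i = 0 then c₁ else c₂, ⊤⟩

/-- A category of two-colored partitions. -/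
def IsCategory (C : Set TCP) : Prop :=
  emptyP ∈ C ∧ idPart true ∈ C ∧ idPart false ∈ C ∧
  lpair true false ∈ C ∧ lpair false true ∈ C ∧
  (∀ p q, p ∈ C → q ∈ C → p.tensor q ∈ C) ∧
  (∀ p, p ∈ C → p.invol ∈ C) ∧
  (∀ p q (h : Composable p q), p ∈ C → q ∈ C → comp p q h ∈ C)

/-! ### Rotations, verticolor reflection, erasing -/

/-- Rotate the leftmost upper point down (identity if the upper row is empty). -/
def rotDownL (p : TCP) : TCP :=
  if h : 0 < p.upper then
    { upper := p.upper - 1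
      lower := p.lower + 1
      upColor := fun j => p.upColor ⟨j + 1, by have := j.isLt; omega⟩
      loColor := fun i => Fin.cases (!(p.upColor ⟨0, h⟩)) (fun i' => p.loColor i') i
      rel := Setoid.comap
        (fun x : Fin (p.upper - 1) ⊕ Fin (p.lower + 1) => match x with
          | .inl j => (Sum.inl ⟨j + 1, by have := j.isLt; omega⟩ : p.Point)
          | .inr i => Fin.cases (Sum.inl ⟨0, h⟩ : p.Point) (fun i' => (Sum.inr i' : p.Point)) i)
        p.rel }
  else p

/-- Rotate the rightmost upper point down (identity if the upper row is empty). -/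
def rotDownR (p : TCP) : TCP :=
  if h : 0 < p.upper then
    { upper := p.upper - 1
      lower := p.lower + 1
      upColor := fun j => p.upColor ⟨j, by have := j.isLt; omega⟩
      loColor := fun i =>
        Fin.lastCases (!(p.upColor ⟨p.upper - 1, by omega⟩)) (fun i' => p.loColor i') i
      rel := Setoid.comap
        (fun x : Fin (p.upper - 1) ⊕ Fin (p.lower + 1) => match x with
          | .inl j => (Sum.inl ⟨j, by have := j.isLt; omega⟩ : p.Point)
          | .inr i => Fin.lastCases (Sum.inl ⟨p.upper - 1, by omega⟩ : p.Point)
              (fun i' => (Sum.inr i' : p.Point)) i)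
        p.rel }
  else p

/-- Rotate the leftmost lower point up (identity if the lower row is empty). -/
def rotUpL (p : TCP) : TCP :=
  if h : 0 < p.lower then
    { upper := p.upper + 1
      lower := p.lower - 1
      upColor := fun j => Fin.cases (!(p.loColor ⟨0, h⟩)) (fun j' => p.upColor j') j
      loColor := fun i => p.loColor ⟨i + 1, by have := i.isLt; omega⟩
      rel := Setoid.comap
        (fun x : Fin (p.upper + 1) ⊕ Fin (p.lower - 1) => match x with
          | .inl j => Fin.cases (Sum.inr ⟨0, h⟩ : p.Point) (fun j' => (Sum.inl j' : p.Point)) j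
          | .inr i => (Sum.inr ⟨i + 1, by have := i.isLt; omega⟩ : p.Point))
        p.rel }
  else p

/-- Rotate the rightmost lower point up (identity if the lower row is empty). -/
def rotUpR (p : TCP) : TCP :=
  if h : 0 < p.lower then
    { upper := p.upper + 1
      lower := p.lower - 1
      upColor := fun j =>
        Fin.lastCases (!(p.loColor ⟨p.lower - 1, by omega⟩)) (fun j' => p.upColor j') j
      loColor := fun i => p.loColor ⟨i, by have := i.isLt; omega⟩
      rel := Setoid.comap
        (fun x : Fin (p.upper + 1) ⊕ Fin (p.lower - 1) => match x with
          | .inl j => Fin.lastCases (Sum.inr ⟨p.lower - 1, by omega⟩ : p.Point)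
              (fun j' => (Sum.inl j' : p.Point)) j
          | .inr i => (Sum.inr ⟨i, by have := i.isLt; omega⟩ : p.Point))
        p.rel }
  else p

/-- Verticolor reflection: reverse both rows and invert all colors. -/
def vreflect (p : TCP) : TCP where
  upper := p.upper
  lower := p.lower
  upColor := fun j => !(p.upColor j.rev)
  loColor := fun i => !(p.loColor i.rev)
  rel := Setoid.comap (Sum.map Fin.rev Fin.rev) p.rel

/-- `{a, b}` is a turn: two cyclically consecutive points of inverse normalized colors. -/
def IsTurn (p : TCP) (a b : p.Point) : Prop :=
  p.relpos a b = 1 ∧ p.ncolor a ≠ p.ncolor b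

/-- `e` identifies the points of `q` with the points of `p` outside `{a, b}`, preserving
rows, colors and order, and `q` carries the block structure obtained from `p` by erasing
`{a, b}` and merging all blocks meeting `{a, b}`. -/
def IsErasingMap (p : TCP) (a b : p.Point) (q : TCP) (e : q.Point → p.Point) : Prop :=
  Function.Injective e ∧
  Set.range e = {x | x ≠ a ∧ x ≠ b} ∧
  (∀ j : Fin q.upper, ∃ j', e (.inl j) = Sum.inl j') ∧
  (∀ i : Fin q.lower, ∃ i', e (.inr i) = Sum.inr i') ∧
  (∀ j₁ j₂ : Fin q.upper, ∀ j₁' j₂' : Fin p.upper,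
    e (.inl j₁) = Sum.inl j₁' → e (.inl j₂) = Sum.inl j₂' → (j₁ < j₂ ↔ j₁' < j₂')) ∧
  (∀ i₁ i₂ : Fin q.lower, ∀ i₁' i₂' : Fin p.lower,
    e (.inr i₁) = Sum.inr i₁' → e (.inr i₂) = Sum.inr i₂' → (i₁ < i₂ ↔ i₁' < i₂')) ∧
  (∀ x, q.color x = p.color (e x)) ∧
  (∀ x y, q.rel.r x y ↔
    (p.rel.r (e x) (e y) ∨
      ((p.rel.r (e x) a ∨ p.rel.r (e x) b) ∧ (p.rel.r (e y) a ∨ p.rel.r (e y) b))))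

/-- `q` is obtained from `p` by erasing the turn `{a, b}`. -/
def IsErasing (p : TCP) (a b : p.Point) (q : TCP) : Prop :=
  p.IsTurn a b ∧ ∃ e : q.Point → p.Point, IsErasingMap p a b q e

/-! ### Auxiliary development for stmt14 -/

/-- Numeric value of a boolean color. -/
noncomputable def cnum (b : Bool) : ℤ := if b then 1 else 0

/-- Prefix color sum up to a point (inclusive) in the cyclic order. -/
noncomputable def hfun (p : TCP) (x : p.Point) : ℤ :=
  ∑ z : p.Point, if p.pos z ≤ p.pos x then p.sgn z else 0

/-- The potential of a point; color distances are differences of potentials mod `Σ(p)`. -/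
noncomputable def g (p : TCP) (x : p.Point) : ℤ := p.hfun x - cnum (p.ncolor x)

/-- Color sum of the lower row. -/
noncomputable def lsum (p : TCP) : ℤ := ∑ i : Fin p.lower, p.sgn (.inr i)

lemma sgn_eq (p : TCP) (x : p.Point) : p.sgn x = 2 * cnum (p.ncolor x) - 1 := by
  unfold sgn cnum; cases p.ncolor x <;> norm_num

lemma pos_inl_val (p : TCP) (j : Fin p.upper) :
    p.pos (.inl j) = p.lower + (p.upper - 1 - (j : ℕ)) := rfl

lemma pos_inr_val (p : TCP) (i : Fin p.lower) : p.pos (.inr i) = (i : ℕ) := rfl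

lemma pos_lt_size (p : TCP) (x : p.Point) : p.pos x < p.size := by
  rcases x with j | i
  · have := j.isLt; rw [pos_inl_val]; unfold size; omega
  · have := i.isLt; rw [pos_inr_val]; unfold size; omega

lemma pos_inr_lt (p : TCP) (i : Fin p.lower) : p.pos (.inr i) < p.lower := i.isLt

lemma lower_le_pos_inl (p : TCP) (j : Fin p.upper) : p.lower ≤ p.pos (.inl j) := by
  rw [pos_inl_val]; omega

lemma pos_inj (p : TCP) {x y : p.Point} (h : p.pos x = p.pos y) : x = y := by
  rcases x with j | i <;> rcases y with j' | i'
  · have h1 := j.isLt; have h2 := j'.isLt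
    rw [pos_inl_val, pos_inl_val] at h
    congr 1; exact Fin.ext (by omega)
  · have h1 := j.isLt; have h2 := i'.isLt
    rw [pos_inl_val, pos_inr_val] at h
    exact absurd h (by omega)
  · have h1 := i.isLt; have h2 := j'.isLt
    rw [pos_inr_val, pos_inl_val] at h
    exact absurd h (by omega)
  · rw [pos_inr_val, pos_inr_val] at h
    congr 1; exact Fin.ext h

lemma tsum_eq (p : TCP) : p.tsum = ∑ z : p.Point, p.sgn z := rfl

lemma relpos_eq (p : TCP) (x z : p.Point) :
    p.relpos x z =
      if p.pos x ≤ p.pos z then p.pos z - p.pos x else p.size + p.pos z - p.pos x := by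
  have hx := p.pos_lt_size x; have hz := p.pos_lt_size z
  unfold relpos
  split_ifs with h
  · have he : p.size + p.pos z - p.pos x = p.size + (p.pos z - p.pos x) := by omega
    rw [he, Nat.add_mod_left, Nat.mod_eq_of_lt (by omega)]
  · rw [Nat.mod_eq_of_lt (by omega)]

lemma csum_Ioc_eq (p : TCP) {x y : p.Point} (hxy : x ≠ y) :
    p.csum (p.Ioc x y) =
      p.hfun y - p.hfun x + (if p.pos x < p.pos y then 0 else p.tsum) := by
  have hxy' : p.pos x ≠ p.pos y := fun h => hxy (p.pos_inj h)
  have hx := p.pos_lt_size x; have hy := p.pos_lt_size y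
  unfold Ioc csum hfun
  rw [Finset.sum_filter, tsum_eq]
  by_cases hlt : p.pos x < p.pos y
  · rw [if_pos hlt, add_zero, ← Finset.sum_sub_distrib]
    refine Finset.sum_congr rfl fun z _ => ?_
    have hz := p.pos_lt_size z
    simp only [relpos_eq]
    split_ifs <;> first | (exfalso; omega) | ring1
  · rw [if_neg hlt, ← Finset.sum_sub_distrib, ← Finset.sum_add_distrib]
    refine Finset.sum_congr rfl fun z _ => ?_
    have hz := p.pos_lt_size z
    simp only [relpos_eq]
    split_ifs <;> first | (exfalso; omega) | ring1

lemma mem_Ioc_self (p : TCP) {x y : p.Point} (hxy : x ≠ y) : y ∈ p.Ioc x y := by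
  have hxy' : p.pos x ≠ p.pos y := fun h => hxy (p.pos_inj h)
  have hx := p.pos_lt_size x; have hy := p.pos_lt_size y
  simp only [Ioc, Finset.mem_filter, Finset.mem_univ, true_and]
  refine ⟨?_, le_refl _⟩
  rw [relpos_eq]; split_ifs <;> omega

lemma Ioo_eq_erase (p : TCP) {x y : p.Point} (hxy : x ≠ y) :
    p.Ioo x y = (p.Ioc x y).erase y := by
  have hxy' : p.pos x ≠ p.pos y := fun h => hxy (p.pos_inj h)
  have hx := p.pos_lt_size x; have hy := p.pos_lt_size y
  ext z
  have hz := p.pos_lt_size z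
  simp only [Ioo, Ioc, Finset.mem_erase, Finset.mem_filter, Finset.mem_univ, true_and]
  constructor
  · rintro ⟨h1, h2⟩
    refine ⟨fun h => ?_, h1, le_of_lt h2⟩
    subst h; omega
  · rintro ⟨hne, h1, h2⟩
    refine ⟨h1, lt_of_le_of_ne h2 fun h => hne (p.pos_inj ?_)⟩
    simp only [relpos_eq] at h
    split_ifs at h <;> omega

lemma csum_Ioo_eq (p : TCP) {x y : p.Point} (hxy : x ≠ y) :
    p.csum (p.Ioo x y) =
      p.hfun y - p.hfun x - p.sgn y + (if p.pos x < p.pos y then 0 else p.tsum) := by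
  rw [Ioo_eq_erase p hxy]
  have hs : p.sgn y + ∑ z ∈ (p.Ioc x y).erase y, p.sgn z = ∑ z ∈ p.Ioc x y, p.sgn z :=
    Finset.add_sum_erase _ p.sgn (p.mem_Ioc_self hxy)
  have h2 : p.csum (p.Ioc x y)
      = p.hfun y - p.hfun x + (if p.pos x < p.pos y then 0 else p.tsum) :=
    csum_Ioc_eq p hxy
  unfold csum at *
  linarith

lemma cdist_eq (p : TCP) (x y : p.Point) :
    p.cdist x y = p.g y - p.g x + (if x ≠ y ∧ p.pos x < p.pos y then 0 else p.tsum) := by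
  unfold cdist
  by_cases hxy : x = y
  · subst hxy
    rw [if_pos rfl, if_neg (by simp)]
    ring
  · rw [if_neg hxy]
    have hcond : ((x ≠ y ∧ p.pos x < p.pos y)) ↔ p.pos x < p.pos y := and_iff_right hxy
    rw [if_congr hcond rfl rfl]
    by_cases hc : p.ncolor x = p.ncolor y
    · rw [if_pos hc, csum_Ioc_eq p hxy]
      unfold g; rw [hc]; ring
    · rw [if_neg hc, csum_Ioo_eq p hxy]
      have hs : p.sgn y = cnum (p.ncolor y) - cnum (p.ncolor x) := by
        unfold sgn cnum
        cases hb : p.ncolor x <;> cases hb' : p.ncolor y <;> simp_all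
      rw [hs]; unfold g; ring

lemma mem_blockOf (p : TCP) {x y : p.Point} : y ∈ p.blockOf x ↔ p.rel.r x y := by
  simp [blockOf]

lemma mem_S_iff {m : ℕ} {p : TCP} :
    (∀ B : Finset p.Point, p.IsBlock B → ∀ a ∈ B, ∀ b ∈ B, (m : ℤ) ∣ p.cdist a b) ↔
      ((m : ℤ) ∣ p.tsum ∧
        ∀ x y : p.Point, p.rel.r x y → (m : ℤ) ∣ (p.g y - p.g x)) := by
  constructor
  · intro H
    have htsum : (m : ℤ) ∣ p.tsum := by
      by_cases hne : Nonempty p.Point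
      · obtain ⟨x⟩ := hne
        have hx : x ∈ p.blockOf x := (mem_blockOf p).2 (p.rel.refl x)
        have hd := H _ ⟨x, rfl⟩ x hx x hx
        simpa [cdist] using hd
      · have h0 : p.tsum = 0 := by
          rw [tsum_eq]
          haveI := not_nonempty_iff.mp hne
          simp
        rw [h0]; exact dvd_zero _
    refine ⟨htsum, fun x y hrel => ?_⟩
    have hx : x ∈ p.blockOf x := (mem_blockOf p).2 (p.rel.refl x)
    have hy : y ∈ p.blockOf x := (mem_blockOf p).2 hrel
    have hd := H _ ⟨x, rfl⟩ x hx y hy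
    rw [cdist_eq] at hd
    split_ifs at hd with h
    · simpa using hd
    · have := dvd_sub hd htsum; simpa using this
  · rintro ⟨htsum, H⟩ B ⟨x, rfl⟩ a ha b hb
    rw [mem_blockOf] at ha hb
    have hab : p.rel.r a b := p.rel.trans (p.rel.symm ha) hb
    rw [cdist_eq]
    split_ifs with h
    · simpa using H a b hab
    · exact dvd_add (H a b hab) htsum

/-! ### Generic row computations -/

lemma hfun_inr_eq (p : TCP) (i : Fin p.lower) :
    p.hfun (.inr i) =
      ∑ i' : Fin p.lower, if (i' : ℕ) ≤ (i : ℕ) then p.sgn (.inr i') else 0 := by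
  unfold hfun
  rw [Fintype.sum_sum_type]
  have h1 : ∀ j' : Fin p.upper,
      (if p.pos (.inl j') ≤ p.pos (.inr i) then p.sgn (.inl j') else 0) = 0 := by
    intro j'
    refine if_neg ?_
    have := p.lower_le_pos_inl j'
    have := p.pos_inr_lt i
    omega
  have h2 : ∀ i' : Fin p.lower,
      (if p.pos (.inr i') ≤ p.pos (.inr i) then p.sgn (.inr i') else 0)
        = (if (i' : ℕ) ≤ (i : ℕ) then p.sgn (.inr i') else 0) := by
    intro i'; rw [pos_inr_val, pos_inr_val]
  simp only [h1, h2, Finset.sum_const_zero, zero_add]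

lemma hfun_inl_eq (p : TCP) (j : Fin p.upper) :
    p.hfun (.inl j) =
      p.lsum + ∑ j' : Fin p.upper, if (j : ℕ) ≤ (j' : ℕ) then p.sgn (.inl j') else 0 := by
  unfold hfun
  rw [Fintype.sum_sum_type]
  have h1 : ∀ j' : Fin p.upper,
      (if p.pos (.inl j') ≤ p.pos (.inl j) then p.sgn (.inl j') else 0)
        = (if (j : ℕ) ≤ (j' : ℕ) then p.sgn (.inl j') else 0) := by
    intro j'
    have hj := j.isLt; have hj' := j'.isLt
    rw [pos_inl_val, pos_inl_val]
    split_ifs <;> first | (exfalso; omega) | rfl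
  have h2 : ∀ i' : Fin p.lower,
      (if p.pos (.inr i') ≤ p.pos (.inl j) then p.sgn (.inr i') else 0) = p.sgn (.inr i') := by
    intro i'
    have := p.pos_inr_lt i'
    have := p.lower_le_pos_inl j
    exact if_pos (by omega)
  simp only [h1, h2]
  rw [add_comm]
  rfl

lemma tsum_split (p : TCP) :
    p.tsum = (∑ j : Fin p.upper, p.sgn (.inl j)) + p.lsum := by
  rw [tsum_eq, Fintype.sum_sum_type]; rfl

/-! ### The empty partition, identity pairs, one-row pairs -/

lemma emptyP_mem (m : ℕ) :
    emptyP ∈ {p : TCP | ∀ B : Finset p.Point, p.IsBlock B →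
      ∀ a ∈ B, ∀ b ∈ B, (m : ℤ) ∣ p.cdist a b} := by
  intro B hB
  obtain ⟨x, _⟩ := hB
  rcases x with x | x <;> exact x.elim0

lemma idPart_mem (m : ℕ) (c : Bool) :
    idPart c ∈ {p : TCP | ∀ B : Finset p.Point, p.IsBlock B →
      ∀ a ∈ B, ∀ b ∈ B, (m : ℤ) ∣ p.cdist a b} := by
  rw [Set.mem_setOf_eq, mem_S_iff]
  have hsl : (idPart c).sgn (.inr ⟨0, Nat.one_pos⟩) = 2 * cnum c - 1 := by
    rw [sgn_eq]; rfl
  have hsu : (idPart c).sgn (.inl ⟨0, Nat.one_pos⟩) = 2 * cnum (!c) - 1 := by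
    rw [sgn_eq]; rfl
  have hcc : cnum (!c) = 1 - cnum c := by cases c <;> simp [cnum]
  have huniv : ∀ j : Fin (idPart c).upper, j = ⟨0, Nat.one_pos⟩ := by
    intro j; exact Fin.ext (by have := j.isLt; simp only [idPart] at this ⊢; omega)
  have huniv' : ∀ i : Fin (idPart c).lower, i = ⟨0, Nat.one_pos⟩ := by
    intro i; exact Fin.ext (by have := i.isLt; simp only [idPart] at this ⊢; omega)
  have hup : ∀ j : Fin (idPart c).upper,
      (∑ j' : Fin (idPart c).upper, (idPart c).sgn (.inl j')) = (idPart c).sgn (.inl j) := by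
    intro j
    rw [Finset.sum_eq_single j (fun b _ hb => absurd ((huniv b).trans (huniv j).symm) hb)
      (fun h => absurd (Finset.mem_univ j) h)]
  have hlsum : (idPart c).lsum = 2 * cnum c - 1 := by
    unfold lsum
    rw [Finset.sum_eq_single ⟨0, Nat.one_pos⟩
      (fun b _ hb => absurd (huniv' b) hb) (fun h => absurd (Finset.mem_univ _) h), hsl]
  have hg : ∀ z : (idPart c).Point, (idPart c).g z = cnum c - 1 := by
    intro z
    rcases z with j | i
    · unfold g
      rw [hfun_inl_eq, hlsum]
      have h1 : (∑ j' : Fin (idPart c).upper,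
          if (j : ℕ) ≤ (j' : ℕ) then (idPart c).sgn (.inl j') else 0)
          = ∑ j' : Fin (idPart c).upper, (idPart c).sgn (.inl j') := by
        refine Finset.sum_congr rfl fun j' _ => if_pos ?_
        rw [huniv j, huniv j']
      rw [h1, hup j, huniv j, hsu]
      have hn : (idPart c).ncolor (.inl ⟨0, Nat.one_pos⟩) = !c := rfl
      rw [hn, hcc]; ring
    · unfold g
      rw [hfun_inr_eq]
      have h1 : (∑ i' : Fin (idPart c).lower,
          if (i' : ℕ) ≤ (i : ℕ) then (idPart c).sgn (.inr i') else 0)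
          = (idPart c).sgn (.inr ⟨0, Nat.one_pos⟩) := by
        rw [Finset.sum_eq_single ⟨0, Nat.one_pos⟩
          (fun b _ hb => absurd (huniv' b) hb) (fun h => absurd (Finset.mem_univ _) h)]
        rw [if_pos (by rw [huniv' i])]
      rw [h1, hsl, huniv' i]
      have hn : (idPart c).ncolor (.inr ⟨0, Nat.one_pos⟩) = c := rfl
      rw [hn]; ring
  constructor
  · have h0 : (idPart c).tsum = 0 := by
      rw [tsum_split, hup ⟨0, Nat.one_pos⟩, hlsum, hsu, hcc]; ring
    rw [h0]; exact dvd_zero _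
  · intro x y _
    rw [hg x, hg y, sub_self]
    exact dvd_zero _

lemma lpair_mem (m : ℕ) (c : Bool) :
    lpair c (!c) ∈ {p : TCP | ∀ B : Finset p.Point, p.IsBlock B →
      ∀ a ∈ B, ∀ b ∈ B, (m : ℤ) ∣ p.cdist a b} := by
  rw [Set.mem_setOf_eq, mem_S_iff]
  have hlow : (lpair c (!c)).lower = 2 := rfl
  have i0 : Fin (lpair c (!c)).lower := ⟨0, by rw [hlow]; omega⟩
  have i1 : Fin (lpair c (!c)).lower := ⟨1, by rw [hlow]; omega⟩
  have hn0 : (lpair c (!c)).ncolor (.inr ⟨0, by rw [hlow]; omega⟩) = c := rfl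
  have hn1 : (lpair c (!c)).ncolor (.inr ⟨1, by rw [hlow]; omega⟩) = !c := rfl
  have hs0 : (lpair c (!c)).sgn (.inr ⟨0, by rw [hlow]; omega⟩) = 2 * cnum c - 1 := by
    rw [sgn_eq, hn0]
  have hs1 : (lpair c (!c)).sgn (.inr ⟨1, by rw [hlow]; omega⟩) = 2 * cnum (!c) - 1 := by
    rw [sgn_eq, hn1]
  have hcc : cnum (!c) = 1 - cnum c := by cases c <;> simp [cnum]
  have hsum : ∀ f : Fin (lpair c (!c)).lower → ℤ,
      (∑ i : Fin (lpair c (!c)).lower, f i)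
        = f ⟨0, by rw [hlow]; omega⟩ + f ⟨1, by rw [hlow]; omega⟩ := by
    intro f
    have : (Finset.univ : Finset (Fin (lpair c (!c)).lower))
        = {⟨0, by rw [hlow]; omega⟩, ⟨1, by rw [hlow]; omega⟩} := by
      ext i
      simp only [Finset.mem_univ, Finset.mem_insert, Finset.mem_singleton, true_iff]
      have h2 : (i : ℕ) < 2 := i.isLt
      rcases (by omega : (i : ℕ) = 0 ∨ (i : ℕ) = 1) with h | h
      · left; exact Fin.ext h
      · right; exact Fin.ext h
    rw [this, Finset.sum_insert (by simp [Fin.ext_iff]), Finset.sum_singleton]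
  have hemptyup : ∀ f : Fin (lpair c (!c)).upper → ℤ,
      (∑ j : Fin (lpair c (!c)).upper, f j) = 0 := by
    intro f
    have : (Finset.univ : Finset (Fin (lpair c (!c)).upper)) = ∅ := by
      ext j; exact absurd j.isLt (by intro h; exact absurd h (by simp [lpair]))
    rw [this, Finset.sum_empty]
  have hlsum : (lpair c (!c)).lsum = 0 := by
    unfold lsum
    rw [hsum, hs0, hs1, hcc]; ring
  have hg : ∀ z : (lpair c (!c)).Point, (lpair c (!c)).g z = cnum c - 1 := by
    intro z
    rcases z with j | i
    · exact absurd j.isLt (by intro h; exact absurd h (by simp [lpair]))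
    · unfold g
      rw [hfun_inr_eq, hsum]
      have h2 : (i : ℕ) < 2 := i.isLt
      rcases (by omega : (i : ℕ) = 0 ∨ (i : ℕ) = 1) with h | h
      · have hthis : i = ⟨0, by rw [hlow]; omega⟩ := Fin.ext h
        rw [hthis, if_pos (le_refl _), if_neg (show ¬((1 : ℕ) ≤ (0 : ℕ)) by omega),
          hs0, hn0]
        ring
      · have hthis : i = ⟨1, by rw [hlow]; omega⟩ := Fin.ext h
        rw [hthis, if_pos (Nat.zero_le 1), if_pos (le_refl _), hs0, hs1, hn1, hcc]
        ring
  constructor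
  · have h0 : (lpair c (!c)).tsum = 0 := by
      rw [tsum_split, hemptyup, hlsum]; ring
    rw [h0]; exact dvd_zero _
  · intro x y _
    rw [hg x, hg y, sub_self]
    exact dvd_zero _

/-! ### Tensor product -/

/-- Identification of the points of a tensor product. -/
noncomputable def tequiv (p q : TCP) : (p.Point ⊕ q.Point) ≃ (p.tensor q).Point where
  toFun := Sum.elim (tinl p q) (tinr p q)
  invFun := ptmap p q
  left_inv := by
    rintro ((j | i) | (j | i)) <;>
      simp [tinl, tinr, ptmap, finSumFinEquiv_symm_apply_castAdd,
        finSumFinEquiv_symm_apply_natAdd]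
  right_inv := by
    have key : ∀ x, Sum.elim (tinl p q) (tinr p q) (ptmap p q x) = x := by
      rintro (x | x)
      · rcases h : finSumFinEquiv.symm x with a | a
        · have hx : Fin.castAdd q.upper a = x := by
            have := congrArg finSumFinEquiv h
            simpa using this.symm
          simp only [ptmap, h, Sum.elim_inl, Sum.elim_inr, tinl, hx]
          rfl
        · have hx : Fin.natAdd p.upper a = x := by
            have := congrArg finSumFinEquiv h
            simpa using this.symm
          simp only [ptmap, h, Sum.elim_inl, Sum.elim_inr, tinr, hx]
          rfl
      · rcases h : finSumFinEquiv.symm x with a | a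
        · have hx : Fin.castAdd q.lower a = x := by
            have := congrArg finSumFinEquiv h
            simpa using this.symm
          simp only [ptmap, h, Sum.elim_inl, Sum.elim_inr, tinl, hx]
          rfl
        · have hx : Fin.natAdd p.lower a = x := by
            have := congrArg finSumFinEquiv h
            simpa using this.symm
          simp only [ptmap, h, Sum.elim_inl, Sum.elim_inr, tinr, hx]
          rfl
    exact key

lemma ptmap_elim (p q : TCP) (w : p.Point ⊕ q.Point) :
    ptmap p q (Sum.elim (tinl p q) (tinr p q) w) = w := (tequiv p q).symm_apply_apply w

lemma tensor_ncolor_inl (p q : TCP) (x : p.Point) :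
    (p.tensor q).ncolor (tinl p q x) = p.ncolor x := by
  rcases x with j | i <;>
    simp [tinl, ncolor, tensor, finSumFinEquiv_symm_apply_castAdd]

lemma tensor_ncolor_inr (p q : TCP) (y : q.Point) :
    (p.tensor q).ncolor (tinr p q y) = q.ncolor y := by
  rcases y with j | i <;>
    simp [tinr, ncolor, tensor, finSumFinEquiv_symm_apply_natAdd]

lemma tensor_sgn_inl (p q : TCP) (x : p.Point) :
    (p.tensor q).sgn (tinl p q x) = p.sgn x := by
  unfold sgn; rw [tensor_ncolor_inl]

lemma tensor_sgn_inr (p q : TCP) (y : q.Point) :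
    (p.tensor q).sgn (tinr p q y) = q.sgn y := by
  unfold sgn; rw [tensor_ncolor_inr]

lemma tensor_pos_inl_up (p q : TCP) (j : Fin p.upper) :
    (p.tensor q).pos (tinl p q (.inl j)) = q.lower + q.upper + p.pos (.inl j) := by
  have hj := j.isLt
  show p.lower + q.lower + (p.upper + q.upper - 1 - ((Fin.castAdd q.upper j : Fin _) : ℕ))
      = q.lower + q.upper + (p.lower + (p.upper - 1 - (j : ℕ)))
  simp only [Fin.coe_castAdd]
  omega

lemma tensor_pos_inl_lo (p q : TCP) (i : Fin p.lower) :
    (p.tensor q).pos (tinl p q (.inr i)) = p.pos (.inr i) := rfl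

lemma tensor_pos_inr_up (p q : TCP) (j : Fin q.upper) :
    (p.tensor q).pos (tinr p q (.inl j)) = p.lower + q.pos (.inl j) := by
  have hj := j.isLt
  show p.lower + q.lower + (p.upper + q.upper - 1 - ((Fin.natAdd p.upper j : Fin _) : ℕ))
      = p.lower + (q.lower + (q.upper - 1 - (j : ℕ)))
  simp only [Fin.coe_natAdd]
  omega

lemma tensor_pos_inr_lo (p q : TCP) (i : Fin q.lower) :
    (p.tensor q).pos (tinr p q (.inr i)) = p.lower + q.pos (.inr i) := by
  show ((Fin.natAdd p.lower i : Fin _) : ℕ) = p.lower + (i : ℕ)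
  simp [Fin.coe_natAdd]

lemma tensor_pos_inl (p q : TCP) (x : p.Point) :
    (p.tensor q).pos (tinl p q x)
      = if p.lower ≤ p.pos x then q.lower + q.upper + p.pos x else p.pos x := by
  rcases x with j | i
  · rw [tensor_pos_inl_up, if_pos (p.lower_le_pos_inl j)]
  · rw [tensor_pos_inl_lo, if_neg (by have := p.pos_inr_lt i; omega)]

lemma tensor_pos_inr (p q : TCP) (y : q.Point) :
    (p.tensor q).pos (tinr p q y) = p.lower + q.pos y := by
  rcases y with j | i
  · exact tensor_pos_inr_up p q j
  · exact tensor_pos_inr_lo p q i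

lemma tll (p q : TCP) (w x : p.Point) :
    (p.tensor q).pos (tinl p q w) ≤ (p.tensor q).pos (tinl p q x) ↔ p.pos w ≤ p.pos x := by
  rw [tensor_pos_inl, tensor_pos_inl]
  split_ifs <;> omega

lemma trr (p q : TCP) (w y : q.Point) :
    (p.tensor q).pos (tinr p q w) ≤ (p.tensor q).pos (tinr p q y) ↔ q.pos w ≤ q.pos y := by
  rw [tensor_pos_inr, tensor_pos_inr]
  omega

lemma trl (p q : TCP) (w : q.Point) (x : p.Point) :
    (p.tensor q).pos (tinr p q w) ≤ (p.tensor q).pos (tinl p q x) ↔ p.lower ≤ p.pos x := by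
  rw [tensor_pos_inr, tensor_pos_inl]
  have h1 := q.pos_lt_size w
  unfold size at h1
  split_ifs <;> omega

lemma tlr (p q : TCP) (w : p.Point) (y : q.Point) :
    (p.tensor q).pos (tinl p q w) ≤ (p.tensor q).pos (tinr p q y) ↔ p.pos w < p.lower := by
  rw [tensor_pos_inr, tensor_pos_inl]
  have h1 := q.pos_lt_size y
  unfold size at h1
  split_ifs with h <;> omega

lemma lsum_filter (p : TCP) :
    (∑ w : p.Point, if p.pos w < p.lower then p.sgn w else 0) = p.lsum := by
  rw [Fintype.sum_sum_type]
  have h1 : ∀ j : Fin p.upper, (if p.pos (.inl j) < p.lower then p.sgn (.inl j) else 0) = 0 :=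
    fun j => if_neg (by have := p.lower_le_pos_inl j; omega)
  have h2 : ∀ i : Fin p.lower,
      (if p.pos (.inr i) < p.lower then p.sgn (.inr i) else 0) = p.sgn (.inr i) :=
    fun i => if_pos (p.pos_inr_lt i)
  simp only [h1, h2, Finset.sum_const_zero, zero_add]
  rfl

lemma tensor_hfun_inl (p q : TCP) (x : p.Point) :
    (p.tensor q).hfun (tinl p q x)
      = p.hfun x + (if p.lower ≤ p.pos x then q.tsum else 0) := by
  unfold hfun
  rw [show (∑ z : (p.tensor q).Point,
        if (p.tensor q).pos z ≤ (p.tensor q).pos (tinl p q x) then (p.tensor q).sgn z else 0)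
      = ∑ w : p.Point ⊕ q.Point,
        (if (p.tensor q).pos (Sum.elim (tinl p q) (tinr p q) w)
            ≤ (p.tensor q).pos (tinl p q x)
          then (p.tensor q).sgn (Sum.elim (tinl p q) (tinr p q) w) else 0)
    from (Fintype.sum_equiv (tequiv p q) _ _ (fun w => rfl)).symm]
  rw [Fintype.sum_sum_type]
  congr 1
  · refine Finset.sum_congr rfl fun w _ => ?_
    simp only [Sum.elim_inl]
    simp only [tll p q w x, tensor_sgn_inl]
  · by_cases hx : p.lower ≤ p.pos x
    · rw [if_pos hx, tsum_eq]
      refine Finset.sum_congr rfl fun w _ => ?_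
      simp only [Sum.elim_inr]
      simp only [trl p q w x, hx, ↓reduceIte, tensor_sgn_inr]
    · rw [if_neg hx]
      refine Finset.sum_eq_zero fun w _ => ?_
      simp only [Sum.elim_inr]
      simp only [trl p q w x, hx, ↓reduceIte]

lemma tensor_hfun_inr (p q : TCP) (y : q.Point) :
    (p.tensor q).hfun (tinr p q y) = p.lsum + q.hfun y := by
  unfold hfun
  rw [show (∑ z : (p.tensor q).Point,
        if (p.tensor q).pos z ≤ (p.tensor q).pos (tinr p q y) then (p.tensor q).sgn z else 0)
      = ∑ w : p.Point ⊕ q.Point,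
        (if (p.tensor q).pos (Sum.elim (tinl p q) (tinr p q) w)
            ≤ (p.tensor q).pos (tinr p q y)
          then (p.tensor q).sgn (Sum.elim (tinl p q) (tinr p q) w) else 0)
    from (Fintype.sum_equiv (tequiv p q) _ _ (fun w => rfl)).symm]
  rw [Fintype.sum_sum_type]
  congr 1
  · rw [← lsum_filter p]
    refine Finset.sum_congr rfl fun w _ => ?_
    simp only [Sum.elim_inl]
    simp only [tlr p q w y, tensor_sgn_inl]
  · refine Finset.sum_congr rfl fun w _ => ?_
    simp only [Sum.elim_inr]
    simp only [trr p q w y, tensor_sgn_inr]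

lemma tensor_g_inl (p q : TCP) (x : p.Point) :
    (p.tensor q).g (tinl p q x) = p.g x + (if p.lower ≤ p.pos x then q.tsum else 0) := by
  unfold g
  rw [tensor_hfun_inl, tensor_ncolor_inl]
  ring

lemma tensor_g_inr (p q : TCP) (y : q.Point) :
    (p.tensor q).g (tinr p q y) = q.g y + p.lsum := by
  unfold g
  rw [tensor_hfun_inr, tensor_ncolor_inr]
  ring

lemma tensor_tsum (p q : TCP) : (p.tensor q).tsum = p.tsum + q.tsum := by
  rw [tsum_eq, tsum_eq, tsum_eq]
  rw [show (∑ z : (p.tensor q).Point, (p.tensor q).sgn z)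
      = ∑ w : p.Point ⊕ q.Point, (p.tensor q).sgn (Sum.elim (tinl p q) (tinr p q) w)
    from (Fintype.sum_equiv (tequiv p q) _ _ (fun w => rfl)).symm]
  rw [Fintype.sum_sum_type]
  congr 1
  · refine Finset.sum_congr rfl fun w _ => ?_
    simp only [Sum.elim_inl]
    rw [tensor_sgn_inl]
  · refine Finset.sum_congr rfl fun w _ => ?_
    simp only [Sum.elim_inr]
    rw [tensor_sgn_inr]

lemma tensor_rel (p q : TCP) {a b : p.Point ⊕ q.Point}
    (h : (p.tensor q).rel.r (Sum.elim (tinl p q) (tinr p q) a)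
      (Sum.elim (tinl p q) (tinr p q) b)) :
    sumRel p.rel.r q.rel.r a b := by
  have h' : sumRel p.rel.r q.rel.r
      (ptmap p q (Sum.elim (tinl p q) (tinr p q) a))
      (ptmap p q (Sum.elim (tinl p q) (tinr p q) b)) := h
  rwa [ptmap_elim, ptmap_elim] at h'

lemma tensor_mem (m : ℕ) (p q : TCP)
    (hp : p ∈ {p : TCP | ∀ B : Finset p.Point, p.IsBlock B →
      ∀ a ∈ B, ∀ b ∈ B, (m : ℤ) ∣ p.cdist a b})
    (hq : q ∈ {p : TCP | ∀ B : Finset p.Point, p.IsBlock B →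
      ∀ a ∈ B, ∀ b ∈ B, (m : ℤ) ∣ p.cdist a b}) :
    p.tensor q ∈ {p : TCP | ∀ B : Finset p.Point, p.IsBlock B →
      ∀ a ∈ B, ∀ b ∈ B, (m : ℤ) ∣ p.cdist a b} := by
  rw [Set.mem_setOf_eq, mem_S_iff] at hp hq ⊢
  obtain ⟨hp1, hp2⟩ := hp
  obtain ⟨hq1, hq2⟩ := hq
  refine ⟨by rw [tensor_tsum]; exact dvd_add hp1 hq1, ?_⟩
  intro a b hrel
  obtain ⟨a', rfl⟩ : ∃ w, Sum.elim (tinl p q) (tinr p q) w = a :=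
    ⟨(tequiv p q).symm a, (tequiv p q).apply_symm_apply a⟩
  obtain ⟨b', rfl⟩ : ∃ w, Sum.elim (tinl p q) (tinr p q) w = b :=
    ⟨(tequiv p q).symm b, (tequiv p q).apply_symm_apply b⟩
  have hr := tensor_rel p q hrel
  have hdiv : ∀ z : p.Point, (m : ℤ) ∣ (if p.lower ≤ p.pos z then q.tsum else 0) := by
    intro z; split_ifs
    · exact hq1
    · exact dvd_zero _
  rcases a' with x | y <;> rcases b' with x' | y'
  · simp only [Sum.elim_inl]
    rw [tensor_g_inl, tensor_g_inl]
    have hx := hp2 x x' hr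
    have e : p.g x' + (if p.lower ≤ p.pos x' then q.tsum else 0)
        - (p.g x + (if p.lower ≤ p.pos x then q.tsum else 0))
        = (p.g x' - p.g x) + ((if p.lower ≤ p.pos x' then q.tsum else 0)
          - (if p.lower ≤ p.pos x then q.tsum else 0)) := by ring
    rw [e]
    exact dvd_add hx (dvd_sub (hdiv x') (hdiv x))
  · exact hr.elim
  · exact hr.elim
  · simp only [Sum.elim_inr]
    rw [tensor_g_inr, tensor_g_inr]
    have e : q.g y' + p.lsum - (q.g y + p.lsum) = q.g y' - q.g y := by ring
    rw [e]
    exact hq2 y y' hr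

/-! ### Involution -/

lemma invol_ncolor (p : TCP) (x : p.invol.Point) :
    p.invol.ncolor x = !(p.ncolor (Sum.swap x)) := by
  rcases x with j | i
  · rfl
  · exact (Bool.not_not (p.upColor i)).symm

lemma invol_sgn (p : TCP) (x : p.invol.Point) :
    p.invol.sgn x = -(p.sgn (Sum.swap x)) := by
  unfold sgn
  rw [invol_ncolor]
  cases p.ncolor (Sum.swap x) <;> simp

lemma invol_pos (p : TCP) (x : p.invol.Point) :
    p.invol.pos x + p.pos (Sum.swap x) + 1 = p.size := by
  rcases x with j | i
  · have hj := j.isLt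
    have hj' : (j : ℕ) < p.lower := by simpa [invol] using hj
    show p.invol.lower + (p.invol.upper - 1 - (j : ℕ)) + ((j : ℕ)) + 1 = p.size
    simp only [invol]
    unfold size
    omega
  · have hi := i.isLt
    have hi' : (i : ℕ) < p.upper := by simpa [invol] using hi
    show (i : ℕ) + (p.lower + (p.upper - 1 - (i : ℕ))) + 1 = p.size
    unfold size
    omega

lemma invol_pos_le (p : TCP) (x z : p.invol.Point) :
    p.invol.pos z ≤ p.invol.pos x ↔ p.pos (Sum.swap x) ≤ p.pos (Sum.swap z) := by
  have h1 := invol_pos p x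
  have h2 := invol_pos p z
  omega

lemma invol_hfun (p : TCP) (x : p.invol.Point) :
    p.invol.hfun x = p.hfun (Sum.swap x) - p.sgn (Sum.swap x) - p.tsum := by
  have step : p.invol.hfun x
      = ∑ w : p.Point, ((if p.pos w ≤ p.pos (Sum.swap x) then p.sgn w else 0)
          - (if w = Sum.swap x then p.sgn w else 0) - p.sgn w) := by
    unfold hfun
    refine Fintype.sum_equiv (Equiv.sumComm (Fin p.lower) (Fin p.upper)) _ _ ?_
    intro z
    have he : (Equiv.sumComm (Fin p.lower) (Fin p.upper)) z = Sum.swap z := rfl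
    rw [he, if_congr (invol_pos_le p x z) rfl rfl, invol_sgn p z]
    rcases eq_or_ne (Sum.swap z) (Sum.swap x) with h3 | h3
    · erw [h3, if_pos (le_refl _), if_pos (le_refl _), if_pos rfl]
      ring
    · have hne : p.pos (Sum.swap z) ≠ p.pos (Sum.swap x) := fun h => h3 (p.pos_inj h)
      erw [if_neg h3]
      by_cases h1 : p.pos (Sum.swap x) ≤ p.pos (Sum.swap z)
      · erw [if_pos h1, if_neg (by omega)]
        ring
      · erw [if_neg h1, if_pos (by omega)]
        ring
  erw [step, Finset.sum_sub_distrib, Finset.sum_sub_distrib]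
  have hs : ∀ y : p.Point, (∑ w : p.Point, if w = y then p.sgn w else 0) = p.sgn y :=
    fun y => by simp
  have h1 := hs (Sum.swap x)
  have h2 : p.hfun (Sum.swap x)
      = ∑ w : p.Point, if p.pos w ≤ p.pos (Sum.swap x) then p.sgn w else 0 := rfl
  have h3 : p.tsum = ∑ w : p.Point, p.sgn w := rfl
  have key : ∀ y : p.Point, ((∑ w : p.Point, if p.pos w ≤ p.pos y then p.sgn w else 0)
      - ∑ w : p.Point, if w = y then p.sgn w else 0) - ∑ w : p.Point, p.sgn w
      = p.hfun y - p.sgn y - p.tsum := fun y => by rw [hs y]; rfl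
  convert key (Sum.swap x)
  exact Iff.rfl

lemma invol_g (p : TCP) (x : p.invol.Point) :
    p.invol.g x = p.g (Sum.swap x) - p.tsum := by
  unfold g
  rw [invol_hfun, invol_ncolor, sgn_eq]
  cases p.ncolor (Sum.swap x) <;> simp [cnum] <;> ring

lemma invol_tsum (p : TCP) : p.invol.tsum = -p.tsum := by
  rw [tsum_eq, tsum_eq, ← Finset.sum_neg_distrib]
  refine Fintype.sum_equiv (Equiv.sumComm (Fin p.lower) (Fin p.upper)) _ _ ?_
  intro z
  exact invol_sgn p z

lemma invol_mem (m : ℕ) (p : TCP)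
    (hp : p ∈ {p : TCP | ∀ B : Finset p.Point, p.IsBlock B →
      ∀ a ∈ B, ∀ b ∈ B, (m : ℤ) ∣ p.cdist a b}) :
    p.invol ∈ {p : TCP | ∀ B : Finset p.Point, p.IsBlock B →
      ∀ a ∈ B, ∀ b ∈ B, (m : ℤ) ∣ p.cdist a b} := by
  rw [Set.mem_setOf_eq, mem_S_iff] at hp ⊢
  obtain ⟨hp1, hp2⟩ := hp
  constructor
  · rw [invol_tsum]; exact Dvd.dvd.neg_right hp1
  · intro x y hrel
    have hr : p.rel.r (Sum.swap x) (Sum.swap y) := hrel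
    rw [invol_g, invol_g]
    have e : p.g (Sum.swap y) - p.tsum - (p.g (Sum.swap x) - p.tsum)
        = p.g (Sum.swap y) - p.g (Sum.swap x) := by ring
    rw [e]
    exact hp2 _ _ hr

/-! ### Composition -/

lemma mid_sgn (p q : TCP) (hc : Composable p q) (k : Fin p.upper) :
    p.sgn (.inl k) = -(q.sgn (.inr (Fin.cast hc.len k))) := by
  unfold sgn
  have h1 : p.ncolor (.inl k) = !(q.ncolor (.inr (Fin.cast hc.len k))) := by
    show Bool.not (p.upColor k) = Bool.not (q.loColor (Fin.cast hc.len k))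
    rw [hc.col k]
  rw [h1]
  cases q.ncolor (.inr (Fin.cast hc.len k)) <;> simp

lemma comp_usum (p q : TCP) (hc : Composable p q) :
    (∑ j : Fin p.upper, p.sgn (.inl j)) = -q.lsum := by
  unfold lsum
  rw [← Finset.sum_neg_distrib]
  refine Fintype.sum_equiv (finCongr hc.len) _ _ ?_
  intro k
  rw [mid_sgn p q hc k]
  rfl

lemma comp_sgn_inl (p q : TCP) (hc : Composable p q) (j : Fin q.upper) :
    (comp p q hc).sgn (.inl j) = q.sgn (.inl j) := rfl

lemma comp_sgn_inr (p q : TCP) (hc : Composable p q) (i : Fin p.lower) :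
    (comp p q hc).sgn (.inr i) = p.sgn (.inr i) := rfl

lemma comp_lsum (p q : TCP) (hc : Composable p q) : (comp p q hc).lsum = p.lsum := rfl

lemma comp_tsum (p q : TCP) (hc : Composable p q) :
    (comp p q hc).tsum = p.tsum + q.tsum := by
  have h1 := tsum_split p
  have h2 := tsum_split q
  have h3 : (comp p q hc).tsum = (∑ j : Fin q.upper, q.sgn (.inl j)) + p.lsum := by
    rw [tsum_split, comp_lsum]
    rfl
  have h4 := comp_usum p q hc
  rw [h3, h1, h2, h4]
  ring

lemma comp_g_inr (p q : TCP) (hc : Composable p q) (i : Fin p.lower) :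
    (comp p q hc).g (.inr i) = p.g (.inr i) := by
  unfold g
  erw [hfun_inr_eq, hfun_inr_eq]
  rfl

lemma comp_g_inl (p q : TCP) (hc : Composable p q) (j : Fin q.upper) :
    (comp p q hc).g (.inl j) = q.g (.inl j) + (p.lsum - q.lsum) := by
  unfold g
  erw [hfun_inl_eq, hfun_inl_eq, comp_lsum]
  have h1 : (∑ j' : Fin (comp p q hc).upper,
      if (j : ℕ) ≤ (j' : ℕ) then (comp p q hc).sgn (.inl j') else 0)
      = ∑ j' : Fin q.upper, if (j : ℕ) ≤ (j' : ℕ) then q.sgn (.inl j') else 0 := rfl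
  have h2 : (comp p q hc).ncolor (.inl j) = q.ncolor (.inl j) := rfl
  rw [h1, h2]
  ring

lemma comp_key (p q : TCP) (hc : Composable p q) (j : Fin p.upper) :
    p.g (.inl j) = q.g (.inr (Fin.cast hc.len j)) + (p.lsum - q.lsum) := by
  have hjv : ((Fin.cast hc.len j : Fin q.lower) : ℕ) = (j : ℕ) := rfl
  unfold g
  rw [hfun_inl_eq, hfun_inr_eq]
  have hre : (∑ k : Fin p.upper, if (j : ℕ) ≤ (k : ℕ) then p.sgn (.inl k) else 0)
      = ∑ i : Fin q.lower, (if (j : ℕ) ≤ (i : ℕ) then -q.sgn (.inr i) else 0) := by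
    refine Fintype.sum_equiv (finCongr hc.len) _ _ ?_
    intro k
    rw [mid_sgn p q hc k]
    rfl
  rw [hre]
  have neg_sum : (∑ i : Fin q.lower, if (j : ℕ) ≤ (i : ℕ) then -q.sgn (.inr i) else 0)
      = -(∑ i : Fin q.lower, if (j : ℕ) ≤ (i : ℕ) then q.sgn (.inr i) else 0) := by
    rw [← Finset.sum_neg_distrib]
    exact Finset.sum_congr rfl fun i _ => by split_ifs <;> ring
  rw [neg_sum]
  have main : (∑ i : Fin q.lower, q.sgn (.inr i))
      - (∑ i : Fin q.lower, if (j : ℕ) ≤ (i : ℕ) then q.sgn (.inr i) else 0)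
      - (∑ i : Fin q.lower, if (i : ℕ) ≤ (j : ℕ) then q.sgn (.inr i) else 0)
      = -q.sgn (.inr (Fin.cast hc.len j)) := by
    rw [← Finset.sum_sub_distrib, ← Finset.sum_sub_distrib]
    have hpt : ∀ i : Fin q.lower,
        q.sgn (.inr i) - (if (j : ℕ) ≤ (i : ℕ) then q.sgn (.inr i) else 0)
          - (if (i : ℕ) ≤ (j : ℕ) then q.sgn (.inr i) else 0)
        = -(if i = Fin.cast hc.len j then q.sgn (.inr i) else 0) := by
      intro i
      rcases lt_trichotomy (i : ℕ) (j : ℕ) with h | h | h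
      · rw [if_neg (by omega), if_pos (by omega),
          if_neg (fun hh => by rw [hh, hjv] at h; omega)]
        ring
      · have hij : i = Fin.cast hc.len j := Fin.ext (by omega)
        rw [if_pos (by omega), if_pos (by omega), if_pos hij]
        ring
      · rw [if_pos (by omega), if_neg (by omega),
          if_neg (fun hh => by rw [hh, hjv] at h; omega)]
        ring
    rw [Finset.sum_congr rfl fun i _ => hpt i, Finset.sum_neg_distrib,
      Finset.sum_ite_eq' Finset.univ (Fin.cast hc.len j) (fun i => q.sgn (.inr i)),
      if_pos (Finset.mem_univ _)]
  have hn1 : p.ncolor (.inl j) = !(q.ncolor (.inr (Fin.cast hc.len j))) := by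
    show Bool.not (p.upColor j) = Bool.not (q.loColor (Fin.cast hc.len j))
    rw [hc.col j]
  have hb : cnum (!(q.ncolor (.inr (Fin.cast hc.len j))))
      = 1 - cnum (q.ncolor (.inr (Fin.cast hc.len j))) := by
    cases q.ncolor (.inr (Fin.cast hc.len j)) <;> simp [cnum]
  have hsgn : q.sgn (.inr (Fin.cast hc.len j))
      = 2 * cnum (q.ncolor (.inr (Fin.cast hc.len j))) - 1 := sgn_eq q _
  rw [hn1, hb]
  have hjl : (∑ i' : Fin q.lower, if (i' : ℕ) ≤ ((Fin.cast hc.len j : Fin q.lower) : ℕ)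
      then q.sgn (.inr i') else 0)
      = ∑ i' : Fin q.lower, if (i' : ℕ) ≤ (j : ℕ) then q.sgn (.inr i') else 0 := by
    exact Finset.sum_congr rfl fun i _ => by rw [hjv]
  rw [hjl]
  unfold lsum
  linarith [main, hsgn]

/-- Transported potential on disjoint union of `q` and `p`. -/
noncomputable def Gc (p q : TCP) : q.Point ⊕ p.Point → ℤ :=
  Sum.elim (fun y => q.g y + (p.lsum - q.lsum)) p.g

lemma comp_G (m : ℕ) (p q : TCP) (hc : Composable p q)
    (hp2 : ∀ x y : p.Point, p.rel.r x y → (m : ℤ) ∣ (p.g y - p.g x))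
    (hq2 : ∀ x y : q.Point, q.rel.r x y → (m : ℤ) ∣ (q.g y - q.g x))
    {u v : q.Point ⊕ p.Point} (h : Relation.EqvGen (compRel p q hc.len) u v) :
    (m : ℤ) ∣ (Gc p q v - Gc p q u) := by
  induction h with
  | rel u v hr =>
    rcases hr with ⟨a, b, rfl, rfl, hab⟩ | ⟨a, b, rfl, rfl, hab⟩ | ⟨j, rfl, rfl⟩ | ⟨j, h1, h2⟩
    · show (m : ℤ) ∣ (q.g b + (p.lsum - q.lsum)) - (q.g a + (p.lsum - q.lsum))
      have e : (q.g b + (p.lsum - q.lsum)) - (q.g a + (p.lsum - q.lsum))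
          = q.g b - q.g a := by ring
      rw [e]
      exact hq2 a b hab
    · show (m : ℤ) ∣ p.g b - p.g a
      exact hp2 a b hab
    · show (m : ℤ) ∣ p.g (.inl j) - (q.g (.inr (Fin.cast hc.len j)) + (p.lsum - q.lsum))
      rw [comp_key p q hc j]
      simp
    · subst h1; subst h2
      show (m : ℤ) ∣ (q.g (.inr (Fin.cast hc.len j)) + (p.lsum - q.lsum)) - p.g (.inl j)
      rw [comp_key p q hc j]
      simp
  | refl u => simp
  | symm u v _ ih =>
    have e : Gc p q u - Gc p q v = -(Gc p q v - Gc p q u) := by ring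
    rw [e]
    exact Dvd.dvd.neg_right ih
  | trans a b c _ _ ih1 ih2 =>
    have e : Gc p q c - Gc p q a = (Gc p q b - Gc p q a) + (Gc p q c - Gc p q b) := by ring
    rw [e]
    exact dvd_add ih1 ih2

/-- The canonical map from points of a composition into the disjoint union. -/
noncomputable def cmap (p q : TCP) (hc : Composable p q) :
    (comp p q hc).Point → (q.Point ⊕ p.Point) := fun x =>
  match x with
  | .inl j => .inl (.inl j)
  | .inr i => .inr (.inr i)

lemma comp_g_eq (p q : TCP) (hc : Composable p q) (x : (comp p q hc).Point) :
    (comp p q hc).g x = Gc p q (cmap p q hc x) := by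
  rcases x with j | i
  · show (comp p q hc).g (.inl j) = q.g (.inl j) + (p.lsum - q.lsum)
    exact comp_g_inl p q hc j
  · show (comp p q hc).g (.inr i) = p.g (.inr i)
    exact comp_g_inr p q hc i

lemma comp_mem (m : ℕ) (p q : TCP) (hc : Composable p q)
    (hp : p ∈ {p : TCP | ∀ B : Finset p.Point, p.IsBlock B →
      ∀ a ∈ B, ∀ b ∈ B, (m : ℤ) ∣ p.cdist a b})
    (hq : q ∈ {p : TCP | ∀ B : Finset p.Point, p.IsBlock B →
      ∀ a ∈ B, ∀ b ∈ B, (m : ℤ) ∣ p.cdist a b}) :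
    comp p q hc ∈ {p : TCP | ∀ B : Finset p.Point, p.IsBlock B →
      ∀ a ∈ B, ∀ b ∈ B, (m : ℤ) ∣ p.cdist a b} := by
  rw [Set.mem_setOf_eq, mem_S_iff] at hp hq ⊢
  obtain ⟨hp1, hp2⟩ := hp
  obtain ⟨hq1, hq2⟩ := hq
  refine ⟨by rw [comp_tsum]; exact dvd_add hp1 hq1, ?_⟩
  intro a b hrel
  rcases a with j | i <;> rcases b with j' | i' <;>
    · rw [comp_g_eq, comp_g_eq]
      exact comp_G m p q hc hp2 hq2 hrel

end TCP
/-- partitions whose same-block color distances are multiples of m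
form a category. -/
theorem stmt14 (m : ℕ) :
    TCP.IsCategory {p : TCP | ∀ B : Finset p.Point, p.IsBlock B →
      ∀ a ∈ B, ∀ b ∈ B, (m : ℤ) ∣ p.cdist a b} := by
  refine ⟨TCP.emptyP_mem m, TCP.idPart_mem m true, TCP.idPart_mem m false,
    TCP.lpair_mem m true, TCP.lpair_mem m false,
    fun p q hp hq => TCP.tensor_mem m p q hp hq,
    fun p hp => TCP.invol_mem m p hp,
    fun p q hc hp hq => TCP.comp_mem m p q hc hp hq⟩
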